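/- Schatten trace-norm bound: if P : L²(Ω) → L²(Ω) is an orthogonal projection with measurable integral kernel R(x,y) satisfying R(x,y) = conj(R(y,x)) and ρ(x) := R(x,x) ≥ 0 locally integrable, and V ∈ L¹(Ω; ρ dx), then PVP is trace class with ‖PVP‖_{S₁} ≤ ∫_Ω |V(x)| ρ(x) dx. -/

import Mathlib

open MeasureTheory ContinuousLinearMap
open scoped InnerProductSpace

open Metric Set
open scoped ENNReal

set_option linter.unusedVariables false


open MeasureTheory ContinuousLinearMap Metric Set
open scoped InnerProductSpace ENNReal

lemma ae_ball_pos {α : Type*} [PseudoMetricSpace α] [SecondCountableTopology α]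
    [MeasurableSpace α] (μ : Measure α) :
    ∀ᵐ x ∂μ, ∀ ε > 0, μ (Metric.ball x ε) ≠ 0 := by
  rw [MeasureTheory.ae_iff]
  set S : Set (Set α) := {U | IsOpen U ∧ μ U = 0} with hS
  obtain ⟨T, hTc, hTS, hTU⟩ :=
    TopologicalSpace.isOpen_sUnion_countable S (fun s hs => hs.1)
  have hO : {x | ¬ ∀ ε > 0, μ (Metric.ball x ε) ≠ 0} ⊆ ⋃₀ S := by
    intro x hx
    push_neg at hx
    obtain ⟨ε, hε, h0⟩ := hx
    exact ⟨Metric.ball x ε, ⟨Metric.isOpen_ball, h0⟩, Metric.mem_ball_self hε⟩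
  have hz : μ (⋃₀ S) = 0 := by
    rw [← hTU]
    exact (measure_sUnion_null_iff hTc).2 fun s hs => (hTS hs).2
  exact measure_mono_null hO hz

lemma avg_close {α : Type*} [MeasurableSpace α] {μ : Measure α} {f : α → ℂ} {s : Set α}
    (h0 : μ s ≠ 0) (htop : μ s ≠ ∞) {c : ℂ} {η : ℝ}
    (hf : IntegrableOn f s μ) (hcl : ∀ x ∈ s, ‖f x - c‖ ≤ η) :
    ‖(((μ s).toReal : ℂ))⁻¹ * ∫ x in s, f x ∂μ - c‖ ≤ η := by
  set m := (μ s).toReal with hm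
  have hmpos : 0 < m := ENNReal.toReal_pos h0 htop
  have hmne : (m : ℂ) ≠ 0 := by
    simpa using ne_of_gt hmpos
  have hconst : IntegrableOn (fun _ => c) s μ := by
    exact integrableOn_const htop
  have h1 : ∫ x in s, f x ∂μ - (m : ℂ) * c = ∫ x in s, (f x - c) ∂μ := by
    rw [integral_sub hf hconst, setIntegral_const]
    simp [hm, Complex.real_smul, Measure.real]
  have h2 : ‖∫ x in s, (f x - c) ∂μ‖ ≤ η * m := by
    apply norm_setIntegral_le_of_norm_le_const_ae' htop.lt_top (ae_of_all _ hcl)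
  have h3 : ((m : ℂ))⁻¹ * ∫ x in s, f x ∂μ - c
      = (m : ℂ)⁻¹ * (∫ x in s, f x ∂μ - (m : ℂ) * c) := by
    field_simp
  rw [h3, h1]
  rw [norm_mul]
  have h4 : ‖((m : ℂ))⁻¹‖ = m⁻¹ := by
    simp [Complex.norm_real, abs_of_pos hmpos]
  rw [h4]
  calc m⁻¹ * ‖∫ x in s, (f x - c) ∂μ‖ ≤ m⁻¹ * (η * m) := by
        apply mul_le_mul_of_nonneg_left h2 (by positivity)
    _ = η := by field_simp

section chunk2
variable {d : ℕ} {μ : Measure (EuclideanSpace ℝ (Fin d))}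

local notation "E" => EuclideanSpace ℝ (Fin d)

/-- normalized indicator of a ball as an L² element -/
noncomputable def bInd (μ : Measure E) (z : E) (δ : ℝ) (hb : μ (Metric.ball z δ) ≠ ∞) :
    Lp ℂ 2 μ :=
  (((μ (Metric.ball z δ)).toReal : ℂ))⁻¹ • indicatorConstLp 2 measurableSet_ball hb (1 : ℂ)

lemma bInd_coe {z : E} {δ : ℝ} (hb : μ (Metric.ball z δ) ≠ ∞) :
    (bInd μ z δ hb : E → ℂ) =ᵐ[μ]
      (Metric.ball z δ).indicator (fun _ => (((μ (Metric.ball z δ)).toReal : ℂ))⁻¹) := by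
  unfold bInd
  filter_upwards [Lp.coeFn_smul ((((μ (Metric.ball z δ)).toReal : ℂ))⁻¹)
      (indicatorConstLp 2 measurableSet_ball hb (1 : ℂ)),
    indicatorConstLp_coeFn (p := 2) (hs := measurableSet_ball (x := z) (ε := δ))
      (hμs := hb) (c := (1 : ℂ))] with y h1 h2
  rw [h1]
  simp only [Pi.smul_apply, h2, smul_eq_mul]
  by_cases hy : y ∈ Metric.ball z δ
  · simp [Set.indicator_of_mem hy]
  · simp [Set.indicator_of_notMem hy]

lemma integral_kernel_bInd (R : E → E → ℂ) {z : E} {δ : ℝ} (hb : μ (Metric.ball z δ) ≠ ∞)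
    (x : E) :
    ∫ y, R x y * (bInd μ z δ hb) y ∂μ
      = (((μ (Metric.ball z δ)).toReal : ℂ))⁻¹ * ∫ y in Metric.ball z δ, R x y ∂μ := by
  set c : ℂ := (((μ (Metric.ball z δ)).toReal : ℂ))⁻¹ with hc
  have h1 : (fun y => R x y * (bInd μ z δ hb) y) =ᵐ[μ]
      (Metric.ball z δ).indicator (fun y => c * R x y) := by
    filter_upwards [bInd_coe hb] with y hy
    rw [hy]
    by_cases h : y ∈ Metric.ball z δ
    · simp [Set.indicator_of_mem h, mul_comm, hc]
    · simp [Set.indicator_of_notMem h]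
  rw [integral_congr_ae h1, integral_indicator measurableSet_ball, integral_const_mul]

lemma inner_P_P {P : Lp ℂ 2 μ →L[ℂ] Lp ℂ 2 μ} (hPsa : IsSelfAdjoint P)
    (hPidem : P ∘L P = P) (u w : Lp ℂ 2 μ) :
    ⟪u, P w⟫_ℂ = ⟪P u, P w⟫_ℂ := by
  conv_lhs => rw [← hPidem]
  rw [ContinuousLinearMap.comp_apply, ← ContinuousLinearMap.adjoint_inner_left,
    hPsa.adjoint_eq]

lemma pairing {R : E → E → ℂ} {P : Lp ℂ 2 μ →L[ℂ] Lp ℂ 2 μ}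
    (hPker : ∀ u : Lp ℂ 2 μ, (P u : E → ℂ) =ᵐ[μ] fun x => ∫ y, R x y * u y ∂μ)
    (w : Lp ℂ 2 μ) {z : E} {δ : ℝ} (h0 : μ (Metric.ball z δ) ≠ 0)
    (hb : μ (Metric.ball z δ) ≠ ∞) {c : ℂ} {η : ℝ}
    (hcl : ∀ x ∈ Metric.ball z δ, ‖(∫ y, R x y * w y ∂μ) - c‖ ≤ η) :
    ‖⟪bInd μ z δ hb, P w⟫_ℂ - c‖ ≤ η := by
  set s := Metric.ball z δ with hs
  set m := (μ s).toReal with hm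
  set F : E → ℂ := fun x => ∫ y, R x y * w y ∂μ with hF
  have hmne : (m : ℂ) ≠ 0 := by
    have : 0 < m := ENNReal.toReal_pos h0 hb
    simpa using ne_of_gt this
  have hinner : ⟪bInd μ z δ hb, P w⟫_ℂ
      = ∫ x, (starRingEnd ℂ) ((bInd μ z δ hb) x) * (P w) x ∂μ := by
    rw [MeasureTheory.L2.inner_def]
    simp_rw [RCLike.inner_apply]
    exact integral_congr_ae (ae_of_all _ fun x => mul_comm _ _)
  have hae : (fun x => (starRingEnd ℂ) ((bInd μ z δ hb) x) * (P w) x) =ᵐ[μ]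
      s.indicator (fun x => (m : ℂ)⁻¹ * F x) := by
    filter_upwards [bInd_coe hb, hPker w] with x h1 h2
    rw [h1, h2]
    by_cases hx : x ∈ s
    · rw [hs] at hx
      simp [Set.indicator_of_mem hx, map_inv₀, Complex.conj_ofReal, hm, hF, hs]
    · rw [hs] at hx
      simp [Set.indicator_of_notMem hx, hs]
  have hint0 : Integrable (fun x => (starRingEnd ℂ) ((bInd μ z δ hb) x) * (P w) x) μ := by
    have := MeasureTheory.L2.integrable_inner (𝕜 := ℂ) (bInd μ z δ hb) (P w)
    simpa [RCLike.inner_apply, mul_comm] using this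
  have hint : Integrable (s.indicator fun x => (m : ℂ)⁻¹ * F x) μ := hint0.congr hae
  have hFint : IntegrableOn F s μ := by
    have h5 : IntegrableOn (fun x => (m : ℂ)⁻¹ * F x) s μ :=
      (integrable_indicator_iff measurableSet_ball).1 hint
    have h6 := h5.const_mul (m : ℂ)
    exact h6.congr (ae_of_all _ fun x => by field_simp)
  rw [hinner, integral_congr_ae hae, integral_indicator measurableSet_ball,
    integral_const_mul]
  exact avg_close h0 hb hFint hcl

end chunk2

section chunk3
variable {d : ℕ} {μ : Measure (EuclideanSpace ℝ (Fin d))}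

local notation "E" => EuclideanSpace ℝ (Fin d)

lemma contIntegrableOn {f : E → ℂ} (hc : Continuous f) {s : Set E} (hb : μ s ≠ ∞)
    (hmeas : MeasurableSet s) {M : ℝ} (hM : ∀ x ∈ s, ‖f x‖ ≤ M) : IntegrableOn f s μ :=
  Measure.integrableOn_of_bounded hb hc.aestronglyMeasurable
    ((ae_restrict_iff' hmeas).2 (ae_of_all _ hM))

lemma moll {R : E → E → ℂ} (hRcont : Continuous fun p : E × E => R p.1 p.2)
    {P : Lp ℂ 2 μ →L[ℂ] Lp ℂ 2 μ} (hPsa : IsSelfAdjoint P) (hPidem : P ∘L P = P)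
    (hPker : ∀ u : Lp ℂ 2 μ, (P u : E → ℂ) =ᵐ[μ] fun x => ∫ y, R x y * u y ∂μ)
    (hfin : ∀ (z : E) (r : ℝ), μ (Metric.ball z r) ≠ ∞)
    (x₀ y₀ : E) (hx₀0 : R x₀ x₀ = 0)
    (hx₀T : ∀ ε > 0, μ (Metric.ball x₀ ε) ≠ 0)
    (hy₀T : ∀ δ > 0, μ (Metric.ball y₀ δ) ≠ 0) :
    R x₀ y₀ = 0 := by
  have key : ∀ η > 0, ‖R x₀ y₀‖ ≤ η := by
    intro η hη
    have hcy : Continuous fun y : E => R x₀ y :=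
      hRcont.comp (continuous_const.prodMk continuous_id)
    obtain ⟨δ, hδpos, hδ⟩ := Metric.continuous_iff.1 hcy y₀ (η/3) (by positivity)
    set v := bInd μ y₀ δ (hfin y₀ δ) with hv
    set C := ‖P v‖ with hC
    have hCpos : (0:ℝ) ≤ C := norm_nonneg _
    set η₂ := (η / (3 * (C + 1)))^2 with hη₂
    have hη₂pos : 0 < η₂ := by positivity
    -- tube lemma near {x₀} × closedBall y₀ δ
    have hgcont : Continuous fun p : E × E => R p.1 p.2 - R x₀ p.2 :=
      hRcont.sub (hRcont.comp (continuous_const.prodMk continuous_snd))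
    have hopen : IsOpen {p : E × E | ‖R p.1 p.2 - R x₀ p.2‖ < η/3} := by
      have he : {p : E × E | ‖R p.1 p.2 - R x₀ p.2‖ < η/3}
          = (fun p : E × E => R p.1 p.2 - R x₀ p.2) ⁻¹' Metric.ball 0 (η/3) := by
        ext p; simp [Metric.mem_ball, dist_eq_norm]
      rw [he]
      exact hgcont.isOpen_preimage _ Metric.isOpen_ball
    obtain ⟨u₁, v₁, hu₁o, _hv₁o, hx₀u, hclv, huv⟩ :=
      generalized_tube_lemma isCompact_singleton (isCompact_closedBall y₀ δ) hopen
        (by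
          rintro ⟨a, b⟩ ⟨ha, hb⟩
          simp only [Set.mem_singleton_iff] at ha
          subst ha
          show ‖R x₀ b - R x₀ b‖ < η/3
          simp only [sub_self, norm_zero]
          positivity)
    obtain ⟨ε₁, hε₁pos, hε₁⟩ := Metric.isOpen_iff.1 hu₁o x₀ (hx₀u rfl)
    have hc2 : ContinuousAt (fun p : E × E => R p.1 p.2) (x₀, x₀) := hRcont.continuousAt
    obtain ⟨ε₂, hε₂pos, hε₂⟩ := Metric.continuousAt_iff.1 hc2 η₂ hη₂pos
    set ε := min ε₁ ε₂ with hε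
    have hεpos : 0 < ε := lt_min hε₁pos hε₂pos
    set uu := bInd μ x₀ ε (hfin x₀ ε) with huu
    -- diagonal smallness
    have hbound : ∀ x ∈ Metric.ball x₀ ε, ∀ y ∈ Metric.ball x₀ ε, ‖R x y‖ ≤ η₂ := by
      intro x hx y hy
      have hd : dist ((x, y) : E × E) ((x₀, x₀) : E × E) < ε₂ := by
        rw [Prod.dist_eq]
        exact max_lt (lt_of_lt_of_le (Metric.mem_ball.1 hx) (min_le_right _ _))
          (lt_of_lt_of_le (Metric.mem_ball.1 hy) (min_le_right _ _))
      have h8 := hε₂ hd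
      rw [hx₀0, dist_eq_norm, sub_zero] at h8
      exact h8.le
    have hcl1 : ∀ x ∈ Metric.ball x₀ ε, ‖(∫ y, R x y * uu y ∂μ) - 0‖ ≤ η₂ := by
      intro x hx
      rw [integral_kernel_bInd]
      have hcx : Continuous fun y : E => R x y :=
        hRcont.comp (continuous_const.prodMk continuous_id)
      have hfint : IntegrableOn (fun y => R x y) (Metric.ball x₀ ε) μ :=
        contIntegrableOn hcx (hfin x₀ ε) measurableSet_ball (hbound x hx)
      exact avg_close (hx₀T ε hεpos) (hfin x₀ ε) hfint
        (fun y hy => by simpa using hbound x hx y hy)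
    have hEst1 : ‖⟪uu, P uu⟫_ℂ - 0‖ ≤ η₂ := pairing hPker uu (hx₀T ε hεpos) (hfin x₀ ε) hcl1
    have hPu : ‖P uu‖ ≤ η / (3 * (C + 1)) := by
      have h1 : RCLike.re ⟪P uu, P uu⟫_ℂ = ‖P uu‖^2 := inner_self_eq_norm_sq _
      have h2 : ⟪P uu, P uu⟫_ℂ = ⟪uu, P uu⟫_ℂ := (inner_P_P hPsa hPidem uu uu).symm
      have h3 : RCLike.re ⟪uu, P uu⟫_ℂ ≤ η₂ :=
        le_trans (RCLike.re_le_norm _) (by simpa using hEst1)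
      have h4 : ‖P uu‖^2 ≤ (η / (3 * (C + 1)))^2 := by
        rw [← h1, h2, ← hη₂]; exact h3
      nlinarith [norm_nonneg (P uu), show (0:ℝ) < η / (3 * (C + 1)) by positivity]
    -- estimate 3
    have hcl3 : ∀ x ∈ Metric.ball x₀ ε, ‖(∫ y, R x y * v y ∂μ) - R x₀ y₀‖ ≤ 2*η/3 := by
      intro x hx
      rw [integral_kernel_bInd]
      have hxu₁ : x ∈ u₁ := hε₁ (lt_of_lt_of_le (Metric.mem_ball.1 hx) (min_le_left _ _))
      have hclose : ∀ y ∈ Metric.ball y₀ δ, ‖R x y - R x₀ y₀‖ ≤ 2*η/3 := by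
        intro y hy
        have t1 : ‖R x y - R x₀ y‖ ≤ η/3 := by
          have : ((x, y) : E × E) ∈ u₁ ×ˢ v₁ :=
            ⟨hxu₁, hclv (Metric.ball_subset_closedBall hy)⟩
          exact (huv this).le
        have t2 : ‖R x₀ y - R x₀ y₀‖ ≤ η/3 := by
          have := hδ y (Metric.mem_ball.1 hy)
          rw [dist_eq_norm] at this
          exact this.le
        calc ‖R x y - R x₀ y₀‖ = ‖(R x y - R x₀ y) + (R x₀ y - R x₀ y₀)‖ := by ring_nf
          _ ≤ ‖R x y - R x₀ y‖ + ‖R x₀ y - R x₀ y₀‖ := norm_add_le _ _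
          _ ≤ 2*η/3 := by linarith
      have hcx : Continuous fun y : E => R x y :=
        hRcont.comp (continuous_const.prodMk continuous_id)
      have hfint : IntegrableOn (fun y => R x y) (Metric.ball y₀ δ) μ :=
        contIntegrableOn hcx (hfin y₀ δ) measurableSet_ball
          (M := ‖R x₀ y₀‖ + 2*η/3) (fun y hy => by
            have := hclose y hy
            have h9 := norm_sub_norm_le (R x y) (R x₀ y₀)
            linarith)
      exact avg_close (hy₀T δ hδpos) (hfin y₀ δ) hfint hclose
    have hEst3 : ‖⟪uu, P v⟫_ℂ - R x₀ y₀‖ ≤ 2*η/3 :=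
      pairing hPker v (hx₀T ε hεpos) (hfin x₀ ε) hcl3
    have h7 : ‖⟪uu, P v⟫_ℂ‖ ≤ (η / (3*(C+1))) * C := by
      rw [inner_P_P hPsa hPidem]
      calc ‖⟪P uu, P v⟫_ℂ‖ ≤ ‖P uu‖ * ‖P v‖ := norm_inner_le_norm _ _
        _ ≤ (η/(3*(C+1))) * C := mul_le_mul_of_nonneg_right hPu hCpos
    have h10 : (η/(3*(C+1))) * C ≤ η/3 := by
      have h11 : (η/(3*(C+1))) * C ≤ (η/(3*(C+1))) * (C+1) :=
        mul_le_mul_of_nonneg_left (by linarith) (by positivity)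
      have h12 : (η/(3*(C+1))) * (C+1) = η/3 := by
        field_simp
      linarith
    calc ‖R x₀ y₀‖ = ‖(R x₀ y₀ - ⟪uu, P v⟫_ℂ) + ⟪uu, P v⟫_ℂ‖ := by ring_nf
      _ ≤ ‖R x₀ y₀ - ⟪uu, P v⟫_ℂ‖ + ‖⟪uu, P v⟫_ℂ‖ := norm_add_le _ _
      _ ≤ 2*η/3 + (η/(3*(C+1))) * C := by
          refine add_le_add ?_ h7
          rw [norm_sub_rev]
          exact hEst3
      _ ≤ η := by linarith
  by_contra hne
  have hpos : 0 < ‖R x₀ y₀‖ := norm_pos_iff.2 hne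
  have := key (‖R x₀ y₀‖/2) (by positivity)
  linarith

end chunk3

set_option maxHeartbeats 1000000 in
theorem stmt18_aux {d : ℕ} {μ : Measure (EuclideanSpace ℝ (Fin d))}
    (hfin : ∀ (z : EuclideanSpace ℝ (Fin d)) (r : ℝ), μ (Metric.ball z r) ≠ ∞)
    (R : EuclideanSpace ℝ (Fin d) → EuclideanSpace ℝ (Fin d) → ℂ)
    (hRcont : Continuous fun p : EuclideanSpace ℝ (Fin d) × EuclideanSpace ℝ (Fin d) =>
      R p.1 p.2)
    (hherm : ∀ x y, R x y = (starRingEnd ℂ) (R y x))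
    (P Mv : Lp ℂ 2 μ →L[ℂ] Lp ℂ 2 μ)
    (hPsa : IsSelfAdjoint P) (hPidem : P ∘L P = P)
    (hPker : ∀ u : Lp ℂ 2 μ,
      (P u : EuclideanSpace ℝ (Fin d) → ℂ) =ᵐ[μ]
        fun x => ∫ y, R x y * u y ∂μ)
    (hrepro : ∀ᵐ x ∂μ,
      ∫ y, ‖R x y‖ ^ 2 ∂μ = (R x x).re)
    (V : EuclideanSpace ℝ (Fin d) → ℂ)
    (hint : Integrable (fun x => ‖V x‖ * (R x x).re) μ)
    (hMv : ∀ u : Lp ℂ 2 μ,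
      (Mv u : EuclideanSpace ℝ (Fin d) → ℂ) =ᵐ[μ] fun x => V x * u x) :
    ∀ (e f : ℕ → Lp ℂ 2 μ),
      Orthonormal ℂ e → Orthonormal ℂ f → ∀ N : ℕ,
      ∑ j ∈ Finset.range N, ‖(⟪(P ∘L Mv ∘L P) (e j), f j⟫_ℂ)‖ ≤
        ∫ x, ‖V x‖ * (R x x).re ∂μ := by
  intro e f he hf N
  -- a.e. kernel representation for the finitely many vectors involved
  have haeE : ∀ᵐ x ∂μ, ∀ j ∈ Finset.range N,
      (P (e j) : EuclideanSpace ℝ (Fin d) → ℂ) x = ∫ y, R x y * (e j) y ∂μ :=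
    (Filter.eventually_all_finset (Finset.range N)).2 fun j _ => hPker (e j)
  have haeF : ∀ᵐ x ∂μ, ∀ j ∈ Finset.range N,
      (P (f j) : EuclideanSpace ℝ (Fin d) → ℂ) x = ∫ y, R x y * (f j) y ∂μ :=
    (Filter.eventually_all_finset (Finset.range N)).2 fun j _ => hPker (f j)
  -- the key pointwise (a.e.) Bessel-type bound
  have main_ae : ∀ᵐ x ∂μ,
      ∑ j ∈ Finset.range N,
        ‖(P (e j) : EuclideanSpace ℝ (Fin d) → ℂ) x‖ *
          ‖(P (f j) : EuclideanSpace ℝ (Fin d) → ℂ) x‖ ≤ (R x x).re := by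
    filter_upwards [haeE, haeF, hrepro, ae_ball_pos μ] with x hE hF hrep hball
    by_cases hInt : Integrable (fun y => ‖R x y‖ ^ 2) μ
    · -- good case : Bessel's inequality
      have hcx : Continuous fun y : EuclideanSpace ℝ (Fin d) => R x y :=
        hRcont.comp (continuous_const.prodMk continuous_id)
      have hmeas : AEStronglyMeasurable
          (fun y : EuclideanSpace ℝ (Fin d) => (starRingEnd ℂ) (R x y)) μ :=
        (Complex.continuous_conj.comp hcx).aestronglyMeasurable
      have hmem : MemLp (fun y : EuclideanSpace ℝ (Fin d) => (starRingEnd ℂ) (R x y)) 2 μ :=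
        (memLp_two_iff_integrable_sq_norm hmeas).2 (by simpa using hInt)
      set k : Lp ℂ 2 μ := hmem.toLp _ with hk
      have hkcoe : (k : EuclideanSpace ℝ (Fin d) → ℂ) =ᵐ[μ]
          fun y => (starRingEnd ℂ) (R x y) := hmem.coeFn_toLp
      have hknorm : ‖k‖ ^ 2 = (R x x).re := by
        rw [← hrep, ← inner_self_eq_norm_sq (𝕜 := ℂ) k, L2.inner_def,
          ← integral_re (L2.integrable_inner k k)]
        apply integral_congr_ae
        filter_upwards [hkcoe] with y hy
        rw [RCLike.inner_apply, hy]
        simp [Complex.mul_conj, Complex.normSq_eq_norm_sq,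
          ← Complex.ofReal_pow]
        rw [← Complex.normSq_apply, Complex.normSq_eq_norm_sq]
      have hinner : ∀ u : Lp ℂ 2 μ, ⟪k, u⟫_ℂ = ∫ y, R x y * u y ∂μ := by
        intro u
        rw [L2.inner_def]
        apply integral_congr_ae
        filter_upwards [hkcoe] with y hy
        rw [RCLike.inner_apply, hy]
        simp [mul_comm]
      have hre_nonneg : (0:ℝ) ≤ (R x x).re := by
        rw [← hrep]; exact integral_nonneg fun y => sq_nonneg _
      have hb_e : ∑ j ∈ Finset.range N, ‖∫ y, R x y * (e j) y ∂μ‖ ^ 2 ≤ (R x x).re := by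
        rw [← hknorm]
        calc ∑ j ∈ Finset.range N, ‖∫ y, R x y * (e j) y ∂μ‖ ^ 2
            = ∑ j ∈ Finset.range N, ‖⟪e j, k⟫_ℂ‖ ^ 2 := by
              refine Finset.sum_congr rfl fun j _ => ?_
              rw [← hinner (e j), norm_inner_symm]
          _ ≤ ‖k‖ ^ 2 := he.sum_inner_products_le k
      have hb_f : ∑ j ∈ Finset.range N, ‖∫ y, R x y * (f j) y ∂μ‖ ^ 2 ≤ (R x x).re := by
        rw [← hknorm]
        calc ∑ j ∈ Finset.range N, ‖∫ y, R x y * (f j) y ∂μ‖ ^ 2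
            = ∑ j ∈ Finset.range N, ‖⟪f j, k⟫_ℂ‖ ^ 2 := by
              refine Finset.sum_congr rfl fun j _ => ?_
              rw [← hinner (f j), norm_inner_symm]
          _ ≤ ‖k‖ ^ 2 := hf.sum_inner_products_le k
      have hsum_eq : ∑ j ∈ Finset.range N,
          ‖(P (e j) : EuclideanSpace ℝ (Fin d) → ℂ) x‖ *
            ‖(P (f j) : EuclideanSpace ℝ (Fin d) → ℂ) x‖
          = ∑ j ∈ Finset.range N,
            ‖∫ y, R x y * (e j) y ∂μ‖ * ‖∫ y, R x y * (f j) y ∂μ‖ := by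
        refine Finset.sum_congr rfl fun j hj => ?_
        rw [hE j hj, hF j hj]
      rw [hsum_eq]
      have hcs := Finset.sum_mul_sq_le_sq_mul_sq (Finset.range N)
        (fun j => ‖∫ y, R x y * (e j) y ∂μ‖) (fun j => ‖∫ y, R x y * (f j) y ∂μ‖)
      have hsnn : (0:ℝ) ≤ ∑ j ∈ Finset.range N,
          ‖∫ y, R x y * (e j) y ∂μ‖ * ‖∫ y, R x y * (f j) y ∂μ‖ :=
        Finset.sum_nonneg fun j _ => mul_nonneg (norm_nonneg _) (norm_nonneg _)
      nlinarith [hcs, hb_e, hb_f, hsnn, hre_nonneg,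
        Finset.sum_nonneg (s := Finset.range N)
          (f := fun j => ‖∫ y, R x y * (e j) y ∂μ‖ ^ 2)
          (fun j _ => sq_nonneg _),
        Finset.sum_nonneg (s := Finset.range N)
          (f := fun j => ‖∫ y, R x y * (f j) y ∂μ‖ ^ 2)
          (fun j _ => sq_nonneg _)]
    · -- degenerate case : the kernel row vanishes a.e.
      have hρ : (R x x).re = 0 := by rw [← hrep, integral_undef hInt]
      have him : (R x x).im = 0 := by
        have h1 := hherm x x
        have h2 : (R x x).im = -(R x x).im := by
          conv_lhs => rw [h1]
          simp
        linarith
      have hx0 : R x x = 0 := Complex.ext hρ him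
      have hR0 : ∀ᵐ y ∂μ, R x y = 0 := by
        filter_upwards [ae_ball_pos μ] with y hyb
        exact moll hRcont hPsa hPidem hPker hfin x y hx0 hball hyb
      have hzero : ∀ u : Lp ℂ 2 μ, ∫ y, R x y * u y ∂μ = 0 := by
        intro u
        have : (fun y => R x y * u y) =ᵐ[μ] fun _ => (0:ℂ) := by
          filter_upwards [hR0] with y hy
          rw [hy, zero_mul]
        rw [integral_congr_ae this, integral_zero]
      rw [hρ]
      apply le_of_eq
      refine Finset.sum_eq_zero fun j hj => ?_
      rw [hE j hj, hF j hj, hzero, hzero, norm_zero, zero_mul]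
  -- rewrite each term of the trace sum
  have term_eq : ∀ j, ⟪(P ∘L Mv ∘L P) (e j), f j⟫_ℂ
      = ∫ x, (starRingEnd ℂ) (V x * (P (e j) : EuclideanSpace ℝ (Fin d) → ℂ) x) *
          (P (f j) : EuclideanSpace ℝ (Fin d) → ℂ) x ∂μ := by
    intro j
    have h1 : (P ∘L Mv ∘L P) (e j) = P (Mv (P (e j))) := rfl
    have h2 : ⟪P (Mv (P (e j))), f j⟫_ℂ = ⟪Mv (P (e j)), P (f j)⟫_ℂ := by
      have h2' := ContinuousLinearMap.adjoint_inner_left P (f j) (Mv (P (e j)))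
      rw [hPsa.adjoint_eq] at h2'
      exact h2'
    rw [h1, h2, L2.inner_def]
    apply integral_congr_ae
    filter_upwards [hMv (P (e j))] with x hx
    rw [RCLike.inner_apply, hx]
    exact mul_comm _ _
  have hIj : ∀ j, Integrable (fun x =>
      ‖V x‖ * (‖(P (e j) : EuclideanSpace ℝ (Fin d) → ℂ) x‖ *
        ‖(P (f j) : EuclideanSpace ℝ (Fin d) → ℂ) x‖)) μ := by
    intro j
    have h1 := (L2.integrable_inner (𝕜 := ℂ) (Mv (P (e j))) (P (f j))).norm
    apply h1.congr
    filter_upwards [hMv (P (e j))] with x hx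
    rw [RCLike.inner_apply, hx]
    simp [norm_mul, mul_assoc]
    ring
  have term_bound : ∀ j, ‖⟪(P ∘L Mv ∘L P) (e j), f j⟫_ℂ‖ ≤
      ∫ x, ‖V x‖ * (‖(P (e j) : EuclideanSpace ℝ (Fin d) → ℂ) x‖ *
        ‖(P (f j) : EuclideanSpace ℝ (Fin d) → ℂ) x‖) ∂μ := by
    intro j
    rw [term_eq j]
    refine (norm_integral_le_integral_norm _).trans (le_of_eq ?_)
    apply integral_congr_ae
    refine ae_of_all _ fun x => ?_
    simp [norm_mul, mul_assoc]
  calc ∑ j ∈ Finset.range N, ‖⟪(P ∘L Mv ∘L P) (e j), f j⟫_ℂ‖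
      ≤ ∑ j ∈ Finset.range N, ∫ x, ‖V x‖ *
          (‖(P (e j) : EuclideanSpace ℝ (Fin d) → ℂ) x‖ *
            ‖(P (f j) : EuclideanSpace ℝ (Fin d) → ℂ) x‖) ∂μ :=
        Finset.sum_le_sum fun j _ => term_bound j
    _ = ∫ x, ∑ j ∈ Finset.range N, ‖V x‖ *
          (‖(P (e j) : EuclideanSpace ℝ (Fin d) → ℂ) x‖ *
            ‖(P (f j) : EuclideanSpace ℝ (Fin d) → ℂ) x‖) ∂μ :=
        (integral_finset_sum _ fun j _ => hIj j).symm
    _ ≤ ∫ x, ‖V x‖ * (R x x).re ∂μ := by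
        refine integral_mono_ae (integrable_finset_sum _ fun j _ => hIj j) hint ?_
        filter_upwards [main_ae] with x hx
        rw [← Finset.mul_sum]
        exact mul_le_mul_of_nonneg_left hx (norm_nonneg _)


/-- trace-norm bound: let `P` be an orthogonal projection on
`L²(Ω)` with hermitian integral kernel `R` satisfying the reproducing property
`∫ |R(x,y)|² dy = R(x,x) = ρ(x)`, and let `V` satisfy `∫ |V| ρ < ∞`. Then
`PVP` is trace class with `‖PVP‖_{S₁} ≤ ∫ |V| ρ`. The trace norm is expressed
through its variational characterization: for all orthonormal systems `(e_j)`,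
`(f_j)`, `∑_j |⟨PVP e_j, f_j⟩| ≤ ∫ |V| ρ`. -/
theorem stmt18 (d : ℕ) (Ω : Set (EuclideanSpace ℝ (Fin d)))
    (R : EuclideanSpace ℝ (Fin d) → EuclideanSpace ℝ (Fin d) → ℂ)
    (hRcont : Continuous fun p : EuclideanSpace ℝ (Fin d) × EuclideanSpace ℝ (Fin d) =>
      R p.1 p.2)
    (hherm : ∀ x y, R x y = (starRingEnd ℂ) (R y x))
    (P Mv : Lp ℂ 2 (volume.restrict Ω) →L[ℂ] Lp ℂ 2 (volume.restrict Ω))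
    (hPsa : IsSelfAdjoint P) (hPidem : P ∘L P = P)
    (hPker : ∀ u : Lp ℂ 2 (volume.restrict Ω),
      (P u : EuclideanSpace ℝ (Fin d) → ℂ) =ᵐ[volume.restrict Ω]
        fun x => ∫ y, R x y * u y ∂(volume.restrict Ω))
    (hrepro : ∀ᵐ x ∂(volume.restrict Ω),
      ∫ y, ‖R x y‖ ^ 2 ∂(volume.restrict Ω) = (R x x).re)
    (V : EuclideanSpace ℝ (Fin d) → ℂ) (hVmeas : Measurable V)
    (hint : Integrable (fun x => ‖V x‖ * (R x x).re) (volume.restrict Ω))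
    (hMv : ∀ u : Lp ℂ 2 (volume.restrict Ω),
      (Mv u : EuclideanSpace ℝ (Fin d) → ℂ) =ᵐ[volume.restrict Ω] fun x => V x * u x) :
    ∀ (e f : ℕ → Lp ℂ 2 (volume.restrict Ω)),
      Orthonormal ℂ e → Orthonormal ℂ f → ∀ N : ℕ,
      ∑ j ∈ Finset.range N, ‖(⟪(P ∘L Mv ∘L P) (e j), f j⟫_ℂ)‖ ≤
        ∫ x, ‖V x‖ * (R x x).re ∂(volume.restrict Ω) := by
  have hfin : ∀ (z : EuclideanSpace ℝ (Fin d)) (r : ℝ),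
      (volume.restrict Ω) (Metric.ball z r) ≠ ∞ := by
    intro z r
    have h1 : (volume.restrict Ω) (Metric.ball z r) ≤ volume (Metric.ball z r) := by
      rw [Measure.restrict_apply measurableSet_ball]
      exact measure_mono Set.inter_subset_left
    exact (lt_of_le_of_lt h1 measure_ball_lt_top).ne
  exact stmt18_aux hfin R hRcont hherm P Mv hPsa hPidem hPker hrepro V hint hMv
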